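/- Standard process tomography fails in real-vector-space quantum theory: there exist two distinct ℝ-linear maps P, P' on 2×2 real symmetric matrices (namely P(M)=(M+Y M Y)/2 and P'(M)=(X M X+Z M Z)/2 restricted to real symmetric matrices, i.e. conjugation maps with real Kraus structure) whose complexifications differ, such that P and P' agree on every real symmetric matrix, yet their canonical extensions P⊗id and P'⊗id to 4×4 matrices differ on the real symmetric matrix |Φ⁺⟩⟨Φ⁺|. -/
import Mathlib


open Matrix Kronecker

namespace Stmt18

noncomputable def X : Matrix (Fin 2) (Fin 2) ℂ := !![0, 1; 1, 0]
noncomputable def Y : Matrix (Fin 2) (Fin 2) ℂ := !![0, -Complex.I; Complex.I, 0]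
noncomputable def Z : Matrix (Fin 2) (Fin 2) ℂ := !![1, 0; 0, -1]

/-- `P(M) = (M + YMY)/2` -/
noncomputable def P (M : Matrix (Fin 2) (Fin 2) ℂ) : Matrix (Fin 2) (Fin 2) ℂ :=
  ((1 : ℂ)/2) • (M + Y * M * Y)

/-- `P'(M) = (XMX + ZMZ)/2` -/
noncomputable def P' (M : Matrix (Fin 2) (Fin 2) ℂ) : Matrix (Fin 2) (Fin 2) ℂ :=
  ((1 : ℂ)/2) • (X * M * X + Z * M * Z)

/-- `P ⊗ id` on `4×4` matrices. -/
noncomputable def Pext (M : Matrix (Fin 2 × Fin 2) (Fin 2 × Fin 2) ℂ) :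
    Matrix (Fin 2 × Fin 2) (Fin 2 × Fin 2) ℂ :=
  ((1 : ℂ)/2) • (M + (Y ⊗ₖ (1 : Matrix (Fin 2) (Fin 2) ℂ)) * M
      * (Y ⊗ₖ (1 : Matrix (Fin 2) (Fin 2) ℂ)))

/-- `P' ⊗ id` on `4×4` matrices. -/
noncomputable def P'ext (M : Matrix (Fin 2 × Fin 2) (Fin 2 × Fin 2) ℂ) :
    Matrix (Fin 2 × Fin 2) (Fin 2 × Fin 2) ℂ :=
  ((1 : ℂ)/2) • ((X ⊗ₖ (1 : Matrix (Fin 2) (Fin 2) ℂ)) * M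
      * (X ⊗ₖ (1 : Matrix (Fin 2) (Fin 2) ℂ))
    + (Z ⊗ₖ (1 : Matrix (Fin 2) (Fin 2) ℂ)) * M
      * (Z ⊗ₖ (1 : Matrix (Fin 2) (Fin 2) ℂ)))

/-- `|Φ⁺⟩⟨Φ⁺|`, a real symmetric `4×4` matrix with entries `(1/2)δδ`. -/
noncomputable def PhipMat : Matrix (Fin 2 × Fin 2) (Fin 2 × Fin 2) ℂ :=
  Matrix.of fun p q =>
    ((1 : ℂ)/2) * ((if p.1 = p.2 then 1 else 0) * (if q.1 = q.2 then 1 else 0))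

/-- Standard process tomography fails in real-vector-space quantum theory:
`P` and `P'` agree on every real symmetric `2×2` matrix, yet `P⊗id` and
`P'⊗id` differ on the real symmetric matrix `|Φ⁺⟩⟨Φ⁺|`. -/
theorem standard_tomography_fails :
    (∀ M : Matrix (Fin 2) (Fin 2) ℂ,
        (∀ i j, (M i j).im = 0) → Mᵀ = M → P M = P' M) ∧
    Pext PhipMat ≠ P'ext PhipMat := by

  constructor
  · intro M him hsym
    have h01 : M 1 0 = M 0 1 := by
      have := congrFun (congrFun hsym 0) 1
      simpa [Matrix.transpose_apply] using this
    ext i j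
    fin_cases i <;> fin_cases j <;>
      simp [P, P', X, Y, Z, Matrix.mul_apply, Matrix.vecMul, dotProduct, Fin.sum_univ_two, h01] <;> ring_nf <;> simp [Complex.I_sq]
  · intro h
    have := congrFun (congrFun h (0, 0)) (1, 1)
    simp [Pext, P'ext, PhipMat, X, Y, Z, Matrix.mul_apply, Fintype.sum_prod_type,
      Fin.sum_univ_two, Matrix.kroneckerMap_apply, Matrix.one_apply] at this
    norm_num at this


end Stmt18
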